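/- Let H be a nonzero complex Hilbert space and let B, C be bounded linear operators on H. Then (1/2)·w(B² + C²) + (1/2)·max{w(B), w(C)}·| w(B + C) − w(B − C) | ≤ w_e(B, C)². -/

import Mathlib

open scoped InnerProductSpace
open ContinuousLinearMap

variable {H : Type*} [NormedAddCommGroup H] [InnerProductSpace ℂ H]
  [CompleteSpace H] [Nontrivial H]

/-- The numerical radius of a bounded linear operator. -/
noncomputable def numRad (A : H →L[ℂ] H) : ℝ :=
  ⨆ x : {x : H // ‖x‖ = 1}, ‖⟪A x.1, x.1⟫_ℂ‖

/-- The Crawford number of a bounded linear operator. -/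
noncomputable def crawford (A : H →L[ℂ] H) : ℝ :=
  ⨅ x : {x : H // ‖x‖ = 1}, ‖⟪A x.1, x.1⟫_ℂ‖

/-- The Euclidean operator radius of a pair of bounded linear operators. -/
noncomputable def euclRad (B C : H →L[ℂ] H) : ℝ :=
  ⨆ x : {x : H // ‖x‖ = 1}, Real.sqrt (‖⟪B x.1, x.1⟫_ℂ‖ ^ 2 + ‖⟪C x.1, x.1⟫_ℂ‖ ^ 2)

/-- The absolute value `|A| = (A*A)^(1/2)` of a bounded linear operator. -/
noncomputable def opAbs (A : H →L[ℂ] H) : H →L[ℂ] H := CFC.sqrt (adjoint A * A)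

/-- The real part `Re(A) = (A + A*)/2` of a bounded linear operator. -/
noncomputable def reOp (A : H →L[ℂ] H) : H →L[ℂ] H := (2 : ℂ)⁻¹ • (A + adjoint A)

/-- The imaginary part `Im(A) = (A - A*)/(2i)` of a bounded linear operator. -/
noncomputable def imOp (A : H →L[ℂ] H) : H →L[ℂ] H := (2 * Complex.I)⁻¹ • (A - adjoint A)

lemma exists_unit_vec : ∃ x : H, ‖x‖ = 1 := by
  obtain ⟨y, hy⟩ := exists_ne (0 : H)
  exact ⟨(‖y‖:ℂ)⁻¹ • y, by simp [norm_smul, norm_inv, inv_mul_cancel₀, hy]⟩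

instance : Nonempty {x : H // ‖x‖ = 1} := by
  obtain ⟨x, hx⟩ := exists_unit_vec (H := H); exact ⟨⟨x, hx⟩⟩

lemma nr_bdd (A : H →L[ℂ] H) :
    BddAbove (Set.range fun x : {x : H // ‖x‖ = 1} => ‖⟪A x.1, x.1⟫_ℂ‖) := by
  refine ⟨‖A‖, ?_⟩
  rintro r ⟨x, rfl⟩
  calc ‖⟪A x.1, x.1⟫_ℂ‖ ≤ ‖A x.1‖ * ‖x.1‖ := norm_inner_le_norm _ _
    _ ≤ ‖A‖ * ‖x.1‖ * ‖x.1‖ := by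
        have := A.le_opNorm x.1
        nlinarith [norm_nonneg x.1]
    _ = ‖A‖ := by rw [x.2]; ring

lemma le_nr (A : H →L[ℂ] H) {x : H} (hx : ‖x‖ = 1) : ‖⟪A x, x⟫_ℂ‖ ≤ numRad A :=
  le_ciSup (nr_bdd A) ⟨x, hx⟩

lemma nr_le {A : H →L[ℂ] H} {M : ℝ} (h : ∀ x : H, ‖x‖ = 1 → ‖⟪A x, x⟫_ℂ‖ ≤ M) :
    numRad A ≤ M :=
  ciSup_le fun x => h x.1 x.2

lemma nr_nonneg (A : H →L[ℂ] H) : 0 ≤ numRad A := by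
  obtain ⟨x, hx⟩ := exists_unit_vec (H := H)
  exact le_trans (norm_nonneg _) (le_nr A hx)

lemma nr_bound_gen (A : H →L[ℂ] H) (y : H) : ‖⟪A y, y⟫_ℂ‖ ≤ numRad A * ‖y‖ ^ 2 := by
  rcases eq_or_ne y 0 with rfl | hy
  · simp
  · have hny : (0:ℝ) < ‖y‖ := norm_pos_iff.mpr hy
    set x : H := (‖y‖:ℂ)⁻¹ • y with hxdef
    have hx : ‖x‖ = 1 := by
      simp [hxdef, norm_smul, norm_inv, inv_mul_cancel₀ hny.ne']
    have key : ⟪A x, x⟫_ℂ = ((‖y‖:ℂ)⁻¹ * (‖y‖:ℂ)⁻¹) * ⟪A y, y⟫_ℂ := by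
      simp [hxdef, inner_smul_left, inner_smul_right, map_inv₀, Complex.conj_ofReal]
      ring
    have h1 := le_nr A hx
    rw [key] at h1
    have h2 : ‖((‖y‖:ℂ)⁻¹ * (‖y‖:ℂ)⁻¹) * ⟪A y, y⟫_ℂ‖
        = (‖y‖⁻¹ * ‖y‖⁻¹) * ‖⟪A y, y⟫_ℂ‖ := by
      simp [norm_mul, norm_inv, Complex.norm_real, abs_of_pos hny]
    rw [h2] at h1
    have := mul_le_mul_of_nonneg_right h1 (le_of_lt (mul_pos hny hny))
    calc ‖⟪A y, y⟫_ℂ‖ = (‖y‖⁻¹ * ‖y‖⁻¹) * ‖⟪A y, y⟫_ℂ‖ * (‖y‖ * ‖y‖) := by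
          field_simp
      _ ≤ numRad A * (‖y‖ * ‖y‖) := this
      _ = numRad A * ‖y‖ ^ 2 := by ring

lemma selfadj_apply_norm_le {G : H →L[ℂ] H} (hG : adjoint G = G) {M : ℝ}
    (h : ∀ y : H, ‖⟪G y, y⟫_ℂ‖ ≤ M * ‖y‖ ^ 2) (x : H) : ‖G x‖ ≤ M * ‖x‖ := by
  have hM : 0 ≤ M := by
    obtain ⟨u, hu⟩ := exists_unit_vec (H := H)
    have := le_trans (norm_nonneg _) (h u)
    simpa [hu] using this
  rcases eq_or_ne (G x) 0 with h0 | h0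
  · simp [h0]; positivity
  · have hx0 : x ≠ 0 := by rintro rfl; simp at h0
    have hGx : (0:ℝ) < ‖G x‖ := norm_pos_iff.mpr h0
    have hxn : (0:ℝ) < ‖x‖ := norm_pos_iff.mpr hx0
    set z : H := ((‖x‖ / ‖G x‖ : ℝ) : ℂ) • G x with hz
    have hzn : ‖z‖ = ‖x‖ := by
      rw [hz, norm_smul, Complex.norm_real, Real.norm_eq_abs,
        abs_of_pos (div_pos hxn hGx)]
      field_simp
    have hsym0 : ⟪G z, x⟫_ℂ = ⟪z, G x⟫_ℂ := by
      conv_lhs => rw [← hG]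
      exact adjoint_inner_left G x z
    have hsym : ⟪G z, x⟫_ℂ = starRingEnd ℂ ⟪G x, z⟫_ℂ := by
      rw [hsym0, ← inner_conj_symm]
    have hpol : (⟪G (x+z), x+z⟫_ℂ).re - (⟪G (x-z), x-z⟫_ℂ).re
        = 4 * (⟪G x, z⟫_ℂ).re := by
      have e : ⟪G (x+z), x+z⟫_ℂ - ⟪G (x-z), x-z⟫_ℂ
          = 2 * (⟪G x, z⟫_ℂ + ⟪G z, x⟫_ℂ) := by
        simp only [map_add, map_sub, inner_add_left, inner_add_right,
          inner_sub_left, inner_sub_right]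
        ring
      have := congrArg Complex.re e
      simp only [Complex.sub_re] at this
      rw [this, hsym, Complex.add_conj, mul_comm, Complex.re_ofReal_mul]
      norm_num
      ring
    have hre : (⟪G x, z⟫_ℂ).re = ‖x‖ * ‖G x‖ := by
      have h1 : ⟪G x, z⟫_ℂ = ((‖x‖ / ‖G x‖ : ℝ):ℂ) * ⟪G x, G x⟫_ℂ := by
        rw [hz, inner_smul_right]
      have h2 : (⟪G x, G x⟫_ℂ).re = ‖G x‖^2 := by
        simpa using inner_self_eq_norm_sq (𝕜 := ℂ) (G x)
      rw [h1, Complex.re_ofReal_mul, h2]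
      field_simp
    have hb1 : (⟪G (x+z), x+z⟫_ℂ).re ≤ M * ‖x+z‖^2 :=
      le_trans (Complex.re_le_norm _) (h _)
    have hb2 : -(M * ‖x-z‖^2) ≤ (⟪G (x-z), x-z⟫_ℂ).re := by
      have := le_trans (Complex.abs_re_le_norm _) (h (x - z))
      rw [abs_le] at this
      exact this.1
    have hpar : ‖x+z‖^2 + ‖x-z‖^2 = 2*(‖x‖^2 + ‖z‖^2) := by
      have := parallelogram_law_with_norm ℂ x z
      nlinarith [this]
    have h6 : ‖x+z‖^2 + ‖x-z‖^2 = 4*‖x‖^2 := by rw [hpar, hzn]; ring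
    have h7 : M*‖x+z‖^2 + M*‖x-z‖^2 = 4*M*‖x‖^2 := by linear_combination M * h6
    have : 4 * (‖x‖ * ‖G x‖) ≤ 4 * M * ‖x‖^2 := by
      linarith [hpol, hre, hb1, hb2, h7]
    nlinarith [this, hxn]

lemma er_bdd (B C : H →L[ℂ] H) :
    BddAbove (Set.range fun x : {x : H // ‖x‖ = 1} =>
      Real.sqrt (‖⟪B x.1, x.1⟫_ℂ‖ ^ 2 + ‖⟪C x.1, x.1⟫_ℂ‖ ^ 2)) := by
  refine ⟨Real.sqrt (‖B‖^2 + ‖C‖^2), ?_⟩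
  rintro r ⟨x, rfl⟩
  apply Real.sqrt_le_sqrt
  have hB : ‖⟪B x.1, x.1⟫_ℂ‖ ≤ ‖B‖ := by
    calc ‖⟪B x.1, x.1⟫_ℂ‖ ≤ ‖B x.1‖ * ‖x.1‖ := norm_inner_le_norm _ _
      _ ≤ ‖B‖ * ‖x.1‖ * ‖x.1‖ := by nlinarith [B.le_opNorm x.1, norm_nonneg x.1]
      _ = ‖B‖ := by rw [x.2]; ring
  have hC : ‖⟪C x.1, x.1⟫_ℂ‖ ≤ ‖C‖ := by
    calc ‖⟪C x.1, x.1⟫_ℂ‖ ≤ ‖C x.1‖ * ‖x.1‖ := norm_inner_le_norm _ _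
      _ ≤ ‖C‖ * ‖x.1‖ * ‖x.1‖ := by nlinarith [C.le_opNorm x.1, norm_nonneg x.1]
      _ = ‖C‖ := by rw [x.2]; ring
  nlinarith [norm_nonneg (⟪B x.1, x.1⟫_ℂ), norm_nonneg (⟪C x.1, x.1⟫_ℂ)]

lemma le_er (B C : H →L[ℂ] H) {x : H} (hx : ‖x‖ = 1) :
    Real.sqrt (‖⟪B x, x⟫_ℂ‖ ^ 2 + ‖⟪C x, x⟫_ℂ‖ ^ 2) ≤ euclRad B C :=
  le_ciSup (er_bdd B C) ⟨x, hx⟩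

lemma er_nonneg (B C : H →L[ℂ] H) : 0 ≤ euclRad B C := by
  obtain ⟨x, hx⟩ := exists_unit_vec (H := H)
  exact le_trans (Real.sqrt_nonneg _) (le_er B C hx)

set_option maxHeartbeats 1000000 in
/-- Pointwise power inequality: `|⟨A² x, x⟩| ≤ w(A)²` for unit `x`. -/
lemma power_pt (A : H →L[ℂ] H) {x : H} (hx : ‖x‖ = 1) :
    ‖⟪(A ^ 2) x, x⟫_ℂ‖ ≤ numRad A ^ 2 := by
  have hA2 : (A ^ 2) x = A (A x) := by
    rw [pow_two]; rfl
  set t : ℂ := ⟪A (A x), x⟫_ℂ with ht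
  rw [hA2, ← ht]
  rcases eq_or_ne t 0 with h0 | h0
  · rw [h0]; simp; positivity
  · have htn : (0:ℝ) < ‖t‖ := norm_pos_iff.mpr h0
    obtain ⟨ν, hν⟩ := IsAlgClosed.exists_pow_nat_eq ((‖t‖:ℂ)⁻¹ * t) zero_lt_two
    have hνn : ‖ν‖ = 1 := by
      have : ‖ν‖^2 = 1 := by
        rw [← norm_pow, hν, norm_mul, norm_inv, Complex.norm_real,
          Real.norm_eq_abs, abs_of_pos htn]
        exact inv_mul_cancel₀ htn.ne'
      nlinarith [norm_nonneg ν]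
    set w := numRad A with hw
    have hw0 : 0 ≤ w := nr_nonneg A
    set ν' := starRingEnd ℂ ν with hν'
    set u : H := x + ν • A x with hu
    set v : H := x - ν' • (adjoint A) x with hv
    set g : H := ν • A x + ν' • (adjoint A) x with hg
    have huv : u - v = g := by rw [hu, hv, hg]; abel
    -- ⟪u, v⟫ = 1 - ν'^2 * t
    have hinner : ⟪u, v⟫_ℂ = 1 - ν' ^ 2 * t := by
      rw [hu, hv]
      simp only [inner_add_left, inner_sub_right, inner_smul_left, inner_smul_right]
      rw [inner_self_eq_norm_sq_to_K, hx, adjoint_inner_right, adjoint_inner_right,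
        ← ht, ← hν']
      push_cast
      ring
    -- cross terms in ‖u‖², ‖v‖²
    have hcross : (⟪x, ν • A x⟫_ℂ).re = (⟪x, ν' • (adjoint A) x⟫_ℂ).re := by
      have e1 : ⟪x, ν • A x⟫_ℂ = ν * ⟪x, A x⟫_ℂ := inner_smul_right _ _ _
      have e2 : ⟪x, ν' • (adjoint A) x⟫_ℂ = ν' * ⟪A x, x⟫_ℂ := by
        rw [inner_smul_right, adjoint_inner_right]
      have e3 : ν' * ⟪A x, x⟫_ℂ = starRingEnd ℂ (ν * ⟪x, A x⟫_ℂ) := by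
        rw [map_mul, ← hν', inner_conj_symm]
      rw [e1, e2, e3, Complex.conj_re]
    have hnu : ‖u‖^2 = 1 + 2*(⟪x, ν • A x⟫_ℂ).re + ‖A x‖^2 := by
      have := norm_add_sq (𝕜 := ℂ) x (ν • A x)
      simp only [RCLike.re_to_complex] at this
      rw [hu, this, hx, norm_smul, hνn]
      ring
    have hnv : ‖v‖^2 = 1 - 2*(⟪x, ν' • (adjoint A) x⟫_ℂ).re + ‖adjoint A x‖^2 := by
      have := norm_sub_sq (𝕜 := ℂ) x (ν' • (adjoint A) x)
      simp only [RCLike.re_to_complex] at this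
      rw [hv, this, hx, norm_smul]
      have : ‖ν'‖ = 1 := by rw [hν']; simpa using hνn
      rw [this]
      ring
    have hsub : ‖u - v‖^2 = ‖u‖^2 - 2*(⟪u,v⟫_ℂ).re + ‖v‖^2 := by
      have := norm_sub_sq (𝕜 := ℂ) u v
      simpa using this
    have hre_uv : (⟪u,v⟫_ℂ).re = 1 - (ν' ^ 2 * t).re := by
      rw [hinner]; simp
    -- key identity
    have hkey : (ν' ^ 2 * t).re = (‖g‖^2 - ‖A x‖^2 - ‖adjoint A x‖^2)/2 := by
      rw [← huv]
      nlinarith [hsub, hre_uv, hnu, hnv, hcross]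
    -- ν'^2 * t = ‖t‖
    have hne : ((‖t‖:ℝ):ℂ) ≠ 0 := by exact_mod_cast htn.ne'
    have hval : ν' ^ 2 * t = (‖t‖ : ℂ) := by
      have h1 : ν' ^ 2 = ((‖t‖:ℝ) : ℂ)⁻¹ * starRingEnd ℂ t := by
        rw [hν', ← map_pow, hν, map_mul, map_inv₀, Complex.conj_ofReal]
      rw [h1, mul_assoc]
      have h2 : starRingEnd ℂ t * t = ((‖t‖:ℝ):ℂ)^2 := by
        rw [mul_comm, Complex.mul_conj, Complex.normSq_eq_norm_sq]
        push_cast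
        ring
      rw [h2, sq, ← mul_assoc, inv_mul_cancel₀ hne, one_mul]
    -- bounds on ‖g‖
    have hg_le₁ : ‖g‖ ≤ ‖A x‖ + ‖adjoint A x‖ := by
      rw [hg]
      calc ‖ν • A x + ν' • (adjoint A) x‖ ≤ ‖ν • A x‖ + ‖ν' • (adjoint A) x‖ :=
            norm_add_le _ _
        _ = ‖A x‖ + ‖adjoint A x‖ := by
            rw [norm_smul, norm_smul, hνn, hν']
            simp [hνn]
    have hg_le₂ : ‖g‖ ≤ 2 * w := by
      set G : H →L[ℂ] H := ν • A + ν' • (adjoint A) with hG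
      have hGx : G x = g := by rw [hG, hg]; simp [add_apply, smul_apply]
      have hGsa : adjoint G = G := by
        have : star G = G := by
          rw [hG]
          rw [star_add, star_smul, star_smul]
          rw [star_eq_adjoint, star_eq_adjoint, adjoint_adjoint]
          rw [hν']
          simp [RCLike.star_def, add_comm]
        rw [← star_eq_adjoint, this]
      have hGb : ∀ y : H, ‖⟪G y, y⟫_ℂ‖ ≤ (2 * w) * ‖y‖ ^ 2 := by
        intro y
        have eb : ⟪(adjoint A) y, y⟫_ℂ = starRingEnd ℂ ⟪A y, y⟫_ℂ := by
          rw [adjoint_inner_left, ← inner_conj_symm]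
        have e : ⟪G y, y⟫_ℂ = ν' * ⟪A y, y⟫_ℂ + starRingEnd ℂ (ν' * ⟪A y, y⟫_ℂ) := by
          rw [hG]
          simp only [add_apply, smul_apply, inner_add_left, inner_smul_left, eb,
            map_mul, ← hν', RingHom.id_apply, Complex.conj_conj]
        calc ‖⟪G y, y⟫_ℂ‖ = ‖((2 * (ν' * ⟪A y, y⟫_ℂ).re : ℝ) : ℂ)‖ := by
              rw [e, Complex.add_conj]
          _ = 2 * |(ν' * ⟪A y, y⟫_ℂ).re| := by
              rw [Complex.norm_real, Real.norm_eq_abs, abs_mul]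
              norm_num
          _ ≤ 2 * ‖ν' * ⟪A y, y⟫_ℂ‖ := by
              have := Complex.abs_re_le_norm (ν' * ⟪A y, y⟫_ℂ)
              linarith
          _ = 2 * ‖⟪A y, y⟫_ℂ‖ := by
              rw [norm_mul, hν']
              simp [hνn]
          _ ≤ (2 * w) * ‖y‖ ^ 2 := by
              have := nr_bound_gen A y
              nlinarith [this]
      have := selfadj_apply_norm_le hGsa hGb x
      rw [hGx, hx, mul_one] at this
      exact this
    -- conclude
    have hs : 0 ≤ ‖A x‖ := norm_nonneg _
    have hr : 0 ≤ ‖adjoint A x‖ := norm_nonneg _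
    have hgn : 0 ≤ ‖g‖ := norm_nonneg _
    have hfin : ‖t‖ ≤ w^2 := by
      have h1 : (ν' ^ 2 * t).re = ‖t‖ := by rw [hval]; simp
      have h2 : ‖g‖^2 ≤ (2*w) * (‖A x‖ + ‖adjoint A x‖) := by
        nlinarith [mul_le_mul hg_le₂ hg_le₁ hgn (by positivity : (0:ℝ) ≤ 2*w)]
      nlinarith [hkey, h1, sq_nonneg (‖A x‖ - w), sq_nonneg (‖adjoint A x‖ - w)]
    exact hfin

set_option maxHeartbeats 1000000 in
theorem stmt0 (B C : H →L[ℂ] H) :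
    (1/2) * numRad (B ^ 2 + C ^ 2)
      + (1/2) * max (numRad B) (numRad C) * |numRad (B + C) - numRad (B - C)|
      ≤ (euclRad B C) ^ 2 := by
  set P := B + C with hP
  set Q := B - C with hQ
  set p := numRad P with hpd
  set q := numRad Q with hqd
  set W := euclRad B C with hWd
  have hp0 : 0 ≤ p := nr_nonneg _
  have hq0 : 0 ≤ q := nr_nonneg _
  have hW0 : 0 ≤ W := er_nonneg B C
  have key2 : ∀ (T : H →L[ℂ] H), (∀ x : H, ‖x‖ = 1 →
      ‖⟪T x, x⟫_ℂ‖ ≤ Real.sqrt (‖⟪B x, x⟫_ℂ‖^2 + ‖⟪C x, x⟫_ℂ‖^2) * Real.sqrt 2)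
      → numRad T ^ 2 ≤ 2 * W ^ 2 := by
    intro T hT
    have hle : numRad T ≤ Real.sqrt 2 * W := by
      apply nr_le
      intro x hx
      have h3 := le_er B C hx
      have h2 := hT x hx
      have hs2 : 0 ≤ Real.sqrt 2 := Real.sqrt_nonneg 2
      nlinarith [Real.sqrt_nonneg (‖⟪B x, x⟫_ℂ‖^2 + ‖⟪C x, x⟫_ℂ‖^2)]
    have h4 : numRad T ^ 2 ≤ (Real.sqrt 2 * W)^2 :=
      pow_le_pow_left₀ (nr_nonneg T) hle 2
    have h5 : (Real.sqrt 2 * W)^2 = 2 * W^2 := by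
      rw [mul_pow, Real.sq_sqrt (by norm_num : (0:ℝ) ≤ 2)]
    linarith
  have hsum_bd : ∀ (b c : ℝ), 0 ≤ b → 0 ≤ c →
      b + c ≤ Real.sqrt (b^2 + c^2) * Real.sqrt 2 := by
    intro b c hb hc
    have h1 : (b+c)^2 ≤ (b^2+c^2)*2 := by nlinarith [sq_nonneg (b-c)]
    have h2 := Real.sqrt_le_sqrt h1
    rw [Real.sqrt_sq (by linarith), Real.sqrt_mul (by positivity)] at h2
    exact h2
  have hp2 : p^2 ≤ 2 * W^2 := by
    apply key2
    intro x hx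
    have e : ⟪P x, x⟫_ℂ = ⟪B x, x⟫_ℂ + ⟪C x, x⟫_ℂ := by
      rw [hP]; simp [add_apply, inner_add_left]
    calc ‖⟪P x, x⟫_ℂ‖ ≤ ‖⟪B x, x⟫_ℂ‖ + ‖⟪C x, x⟫_ℂ‖ := e ▸ norm_add_le _ _
      _ ≤ _ := hsum_bd _ _ (norm_nonneg _) (norm_nonneg _)
  have hq2 : q^2 ≤ 2 * W^2 := by
    apply key2
    intro x hx
    have e : ⟪Q x, x⟫_ℂ = ⟪B x, x⟫_ℂ - ⟪C x, x⟫_ℂ := by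
      rw [hQ]; simp [sub_apply, inner_sub_left]
    calc ‖⟪Q x, x⟫_ℂ‖ ≤ ‖⟪B x, x⟫_ℂ‖ + ‖⟪C x, x⟫_ℂ‖ := by
          rw [e]; exact norm_sub_le _ _
      _ ≤ _ := hsum_bd _ _ (norm_nonneg _) (norm_nonneg _)
  have hB : 2 * numRad B ≤ p + q := by
    have : numRad B ≤ (p + q)/2 := by
      apply nr_le
      intro x hx
      have e : ⟪P x, x⟫_ℂ + ⟪Q x, x⟫_ℂ = (2:ℂ) * ⟪B x, x⟫_ℂ := by
        rw [hP, hQ]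
        simp only [add_apply, sub_apply, inner_add_left, inner_sub_left]
        ring
      have h1 : ‖⟪P x, x⟫_ℂ + ⟪Q x, x⟫_ℂ‖ ≤ p + q :=
        le_trans (norm_add_le _ _) (add_le_add (le_nr P hx) (le_nr Q hx))
      rw [e] at h1
      rw [norm_mul] at h1
      simp only [Complex.norm_ofNat] at h1
      linarith
    linarith
  have hC : 2 * numRad C ≤ p + q := by
    have : numRad C ≤ (p + q)/2 := by
      apply nr_le
      intro x hx
      have e : ⟪P x, x⟫_ℂ - ⟪Q x, x⟫_ℂ = (2:ℂ) * ⟪C x, x⟫_ℂ := by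
        rw [hP, hQ]
        simp only [add_apply, sub_apply, inner_add_left, inner_sub_left]
        ring
      have h1 : ‖⟪P x, x⟫_ℂ - ⟪Q x, x⟫_ℂ‖ ≤ p + q :=
        le_trans (norm_sub_le _ _) (add_le_add (le_nr P hx) (le_nr Q hx))
      rw [e] at h1
      rw [norm_mul] at h1
      simp only [Complex.norm_ofNat] at h1
      linarith
    linarith
  have hw : numRad (B^2 + C^2) ≤ (p^2 + q^2)/2 := by
    apply nr_le
    intro x hx
    have hop : P^2 + Q^2 = (B^2 + C^2) + (B^2 + C^2) := by
      rw [hP, hQ]; noncomm_ring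
    have e : ⟪(P^2) x, x⟫_ℂ + ⟪(Q^2) x, x⟫_ℂ
        = ⟪(B^2+C^2) x, x⟫_ℂ + ⟪(B^2+C^2) x, x⟫_ℂ := by
      have := congrArg (fun T : H →L[ℂ] H => ⟪T x, x⟫_ℂ) hop
      simpa [add_apply, inner_add_left] using this
    have h1 : ‖⟪(B^2+C^2) x, x⟫_ℂ + ⟪(B^2+C^2) x, x⟫_ℂ‖
        = 2 * ‖⟪(B^2+C^2) x, x⟫_ℂ‖ := by
      rw [← two_mul, norm_mul]
      simp
    have h2 : ‖⟪(P^2) x, x⟫_ℂ + ⟪(Q^2) x, x⟫_ℂ‖ ≤ p^2 + q^2 :=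
      le_trans (norm_add_le _ _) (add_le_add (power_pt P hx) (power_pt Q hx))
    rw [e, h1] at h2
    linarith
  have hm0 : 0 ≤ max (numRad B) (numRad C) :=
    le_trans (nr_nonneg B) (le_max_left _ _)
  have hM : 2 * max (numRad B) (numRad C) ≤ p + q := by
    rcases max_cases (numRad B) (numRad C) with ⟨h, _⟩ | ⟨h, _⟩ <;> rw [h]
    · exact hB
    · exact hC
  rcases abs_cases (p - q) with ⟨h1, h2⟩ | ⟨h1, h2⟩ <;> rw [h1]
  · nlinarith [mul_le_mul_of_nonneg_right hM h2, hw, hp2]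
  · nlinarith [mul_le_mul_of_nonneg_right hM (by linarith : (0:ℝ) ≤ q - p), hw, hq2]
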